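/- Both of the operators in the previous identity annihilate the functions (x-1)^{b+i} x^{a-b-s} for i = 0, 1, ..., s; that is, for each such i, the composition (x(x-1)d/dx - a(x-1) - b - s)···(x(x-1)d/dx - a(x-1) - b) applied to (x-1)^{b+i} x^{a-b-s} is zero. -/

import Mathlib

open Complex

/-- The composition (from right to left) of the operators
`x(x-1) d/dx - a(x-1) - b - j` for `j = 0, 1, ..., n`, acting on functions of a
real variable with complex values. -/
noncomputable def opComp (a b : ℂ) : ℕ → (ℝ → ℂ) → (ℝ → ℂ)
  | 0, f => fun x => (x : ℂ) * ((x : ℂ) - 1) * deriv f x - (a * ((x : ℂ) - 1) + b) * f x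
  | n + 1, f => fun x =>
      (x : ℂ) * ((x : ℂ) - 1) * deriv (opComp a b n f) x
        - (a * ((x : ℂ) - 1) + b + (n + 1)) * opComp a b n f x

/-- Basis functions. -/
noncomputable def Fk (a b : ℂ) (s : ℕ) (k : ℕ) : ℝ → ℂ :=
  fun y => ((y : ℂ) - 1) ^ (b + k) * (y : ℂ) ^ (a - b - (s : ℂ))

/-- Coefficients in the expansion of `opComp a b n (Fk a b s i)`. -/
noncomputable def coefc (s i : ℕ) : ℕ → ℕ → ℂ
  | 0, k => (if k = i then (i : ℂ) else 0) + (if k = i + 1 then (i : ℂ) - s else 0)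
  | n + 1, k => ((k : ℂ) - (n + 1)) * coefc s i n k +
      (match k with
        | 0 => 0
        | m + 1 => ((m : ℂ) - s) * coefc s i n m)

lemma coefc_top (s i : ℕ) (hi : i ≤ s) : ∀ n, coefc s i n (s + 1) = 0 := by
  intro n
  induction n with
  | zero =>
      simp only [coefc]
      have h1 : s + 1 ≠ i := by omega
      rcases eq_or_ne (s + 1) (i + 1) with h2 | h2
      · have h3 : i = s := by omega
        subst h3
        simp [h1]
      · simp [h1, h2, show s ≠ i by omega]
  | succ n ih =>
      simp only [coefc, ih, mul_zero, zero_add, sub_self, zero_mul, add_zero]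

lemma coefc_low (s i : ℕ) : ∀ n k, k ≤ n → coefc s i n k = 0 := by
  intro n
  induction n with
  | zero =>
      intro k hk
      interval_cases k
      simp only [coefc]
      rcases eq_or_ne i 0 with h | h
      · simp [h]
      · simp [Ne.symm h]
  | succ n ih =>
      intro k hk
      rcases Nat.lt_or_ge k (n + 1) with h | h
      · have h0 := ih k (by omega)
        cases k with
        | zero => simp only [coefc, h0, mul_zero, zero_add]
        | succ m =>
            have hm := ih m (by omega)
            simp only [coefc, h0, hm, mul_zero, zero_add]
      · have hkeq : k = n + 1 := le_antisymm hk h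
        subst hkeq
        have hm := ih n le_rfl
        simp only [coefc, hm, mul_zero, add_zero]
        push_cast
        ring

lemma Fk_hasDerivAt (a b : ℂ) (s k : ℕ) (x : ℝ) (hx : 1 < x) :
    HasDerivAt (Fk a b s k)
      ((b + k) * ((x : ℂ) - 1) ^ (b + k - 1) * (x : ℂ) ^ (a - b - (s : ℂ))
        + ((x : ℂ) - 1) ^ (b + k) * ((a - b - (s : ℂ)) * (x : ℂ) ^ (a - b - (s : ℂ) - 1))) x := by
  have h1 : ((x : ℂ) - 1) ∈ Complex.slitPlane := by
    rw [Complex.mem_slitPlane_iff]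
    left
    simp [sub_re]
    linarith
  have h2 : (x : ℂ) ∈ Complex.slitPlane := by
    rw [Complex.mem_slitPlane_iff]
    left
    simp
    linarith
  have e1 : HasDerivAt (fun z : ℂ => (z - 1) ^ (b + k))
      ((b + k) * ((x : ℂ) - 1) ^ (b + k - 1)) (x : ℂ) := by
    have := (HasDerivAt.cpow_const (c := b + k) ((hasDerivAt_id (x : ℂ)).sub_const 1) h1)
    simpa using this
  have e2 : HasDerivAt (fun z : ℂ => z ^ (a - b - (s : ℂ)))
      ((a - b - (s : ℂ)) * (x : ℂ) ^ (a - b - (s : ℂ) - 1)) (x : ℂ) := by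
    have := (HasDerivAt.cpow_const (c := a - b - (s : ℂ)) (hasDerivAt_id (x : ℂ)) h2)
    simpa using this
  exact (e1.mul e2).comp_ofReal (z := x)

/-- Action of one factor of the operator on a basis function. -/
lemma op_on_F (a b : ℂ) (s k : ℕ) (j : ℂ) (x : ℝ) (hx : 1 < x) :
    (x : ℂ) * ((x : ℂ) - 1) *
        ((b + k) * ((x : ℂ) - 1) ^ (b + k - 1) * (x : ℂ) ^ (a - b - (s : ℂ))
          + ((x : ℂ) - 1) ^ (b + k) * ((a - b - (s : ℂ)) * (x : ℂ) ^ (a - b - (s : ℂ) - 1)))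
      - (a * ((x : ℂ) - 1) + b + j) * Fk a b s k x
    = ((k : ℂ) - s) * Fk a b s (k + 1) x + ((k : ℂ) - j) * Fk a b s k x := by
  have hz : ((x : ℂ) - 1) ≠ 0 := by
    intro h
    have : (x : ℂ) = 1 := by linear_combination h
    have : x = 1 := by exact_mod_cast congrArg Complex.re this
    linarith
  have hw : (x : ℂ) ≠ 0 := by
    intro h
    have : x = 0 := by exact_mod_cast congrArg Complex.re h
    linarith
  have hz1 : ((x : ℂ) - 1) ^ (b + k - 1) = ((x : ℂ) - 1) ^ (b + k) / ((x : ℂ) - 1) := by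
    rw [Complex.cpow_sub _ _ hz, Complex.cpow_one]
  have hw1 : (x : ℂ) ^ (a - b - (s : ℂ) - 1) = (x : ℂ) ^ (a - b - (s : ℂ)) / (x : ℂ) := by
    rw [Complex.cpow_sub _ _ hw, Complex.cpow_one]
  have hz2 : ((x : ℂ) - 1) ^ (b + ((k : ℕ) + 1 : ℕ) : ℂ)
      = ((x : ℂ) - 1) ^ (b + k) * ((x : ℂ) - 1) := by
    have : (b + ((k : ℕ) + 1 : ℕ) : ℂ) = (b + k) + 1 := by push_cast; ring
    rw [this, Complex.cpow_add _ _ hz, Complex.cpow_one]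
  simp only [Fk, hz1, hw1, hz2]
  field_simp
  ring

noncomputable def Fd (a b : ℂ) (s k : ℕ) (x : ℝ) : ℂ :=
  (b + k) * ((x : ℂ) - 1) ^ (b + k - 1) * (x : ℂ) ^ (a - b - (s : ℂ))
    + ((x : ℂ) - 1) ^ (b + k) * ((a - b - (s : ℂ)) * (x : ℂ) ^ (a - b - (s : ℂ) - 1))

lemma coefc_succ_succ (s i n m : ℕ) :
    coefc s i (n + 1) (m + 1)
      = (((m + 1 : ℕ) : ℂ) - (n + 1)) * coefc s i n (m + 1)
        + ((m : ℂ) - s) * coefc s i n m := rfl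

lemma coefc_succ_zero (s i n : ℕ) :
    coefc s i (n + 1) 0 = (((0 : ℕ) : ℂ) - ((n : ℂ) + 1)) * coefc s i n 0 := by
  have h : coefc s i (n + 1) 0
      = (((0 : ℕ) : ℂ) - ((n : ℂ) + 1)) * coefc s i n 0 + 0 := rfl
  rw [h, add_zero]

lemma main_expansion (a b : ℂ) (s i : ℕ) (hi : i ≤ s) :
    ∀ n, ∀ x : ℝ, 1 < x →
      opComp a b n (Fk a b s i) x
        = ∑ k ∈ Finset.range (s + 2), coefc s i n k * Fk a b s k x := by
  intro n
  induction n with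
  | zero =>
      intro x hx
      have hD := Fk_hasDerivAt a b s i x hx
      have key := op_on_F a b s i 0 x hx
      rw [add_zero, sub_zero] at key
      show (x : ℂ) * ((x : ℂ) - 1) * deriv (Fk a b s i) x
          - (a * ((x : ℂ) - 1) + b) * Fk a b s i x = _
      rw [hD.deriv, key]
      have hmem1 : i ∈ Finset.range (s + 2) := Finset.mem_range.mpr (by omega)
      have hmem2 : i + 1 ∈ Finset.range (s + 2) := Finset.mem_range.mpr (by omega)
      simp only [coefc, add_mul, ite_mul, zero_mul, Finset.sum_add_distrib,
        Finset.sum_ite_eq', hmem1, hmem2, if_true]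
      ring
  | succ n ih =>
      intro x hx
      have hG : HasDerivAt
          (fun y : ℝ => ∑ k ∈ Finset.range (s + 2), coefc s i n k * Fk a b s k y)
          (∑ k ∈ Finset.range (s + 2), coefc s i n k * Fd a b s k x) x := by
        apply HasDerivAt.fun_sum
        intro k _
        exact (Fk_hasDerivAt a b s k x hx).const_mul _
      have heq : deriv (opComp a b n (Fk a b s i)) x
          = deriv (fun y : ℝ => ∑ k ∈ Finset.range (s + 2), coefc s i n k * Fk a b s k y) x := by
        apply Filter.EventuallyEq.deriv_eq
        filter_upwards [Ioi_mem_nhds hx] with y hy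
        exact ih y hy
      show (x : ℂ) * ((x : ℂ) - 1) * deriv (opComp a b n (Fk a b s i)) x
          - (a * ((x : ℂ) - 1) + b + (n + 1)) * opComp a b n (Fk a b s i) x = _
      rw [heq, hG.deriv, ih x hx, Finset.mul_sum, Finset.mul_sum, ← Finset.sum_sub_distrib]
      have step : ∀ k ∈ Finset.range (s + 2),
          (x : ℂ) * ((x : ℂ) - 1) * (coefc s i n k * Fd a b s k x)
            - (a * ((x : ℂ) - 1) + b + (n + 1)) * (coefc s i n k * Fk a b s k x)
          = coefc s i n k * (((k : ℂ) - s) * Fk a b s (k + 1) x)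
            + coefc s i n k * (((k : ℂ) - (n + 1)) * Fk a b s k x) := by
        intro k _
        have hop := op_on_F a b s k ((n : ℂ) + 1) x hx
        have : (x : ℂ) * ((x : ℂ) - 1) * Fd a b s k x
            - (a * ((x : ℂ) - 1) + b + ((n : ℂ) + 1)) * Fk a b s k x
            = ((k : ℂ) - s) * Fk a b s (k + 1) x + ((k : ℂ) - ((n : ℂ) + 1)) * Fk a b s k x := hop
        linear_combination coefc s i n k * this
      rw [Finset.sum_congr rfl step, Finset.sum_add_distrib]
      -- shift the first sum
      rw [Finset.sum_range_succ (fun k => coefc s i n k * (((k : ℂ) - s) * Fk a b s (k + 1) x))]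
      rw [coefc_top s i hi n]
      rw [Finset.sum_range_succ' (fun k => coefc s i n k * (((k : ℂ) - (n + 1)) * Fk a b s k x))]
      conv_rhs => rw [Finset.sum_range_succ' (fun k => coefc s i (n + 1) k * Fk a b s k x)]
      simp only [coefc_succ_succ, coefc_succ_zero, zero_mul, zero_add, add_zero,
        Nat.cast_zero, Nat.cast_add, Nat.cast_one]
      rw [← add_assoc, ← Finset.sum_add_distrib]
      congr 1
      · exact Finset.sum_congr rfl fun m _ => by ring
      · ring

theorem stmt4 (a b : ℂ) (s : ℕ) (i : ℕ) (hi : i ≤ s) (x : ℝ) (hx : 1 < x) :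
    opComp a b s (fun y : ℝ => ((y : ℂ) - 1) ^ (b + i) * (y : ℂ) ^ (a - b - s)) x = 0 := by
  have h := main_expansion a b s i hi s x hx
  have hF : (fun y : ℝ => ((y : ℂ) - 1) ^ (b + i) * (y : ℂ) ^ (a - b - s)) = Fk a b s i := rfl
  rw [hF, h]
  apply Finset.sum_eq_zero
  intro k hk
  rw [Finset.mem_range] at hk
  rcases Nat.lt_or_ge k (s + 1) with h1 | h1
  · rw [coefc_low s i s k (by omega), zero_mul]
  · have : k = s + 1 := by omega
    subst this
    rw [coefc_top s i hi s, zero_mul]
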